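/- arXiv:1404.3628 — 2 statements merged into one kernel-verified Lean document; each statement's English description precedes it below -/
import Mathlib

section
/- Let d ≥ 2 and let P = (1/2)(1 − F) be the projector onto the antisymmetric subspace of ℂ^d ⊗ ℂ^d, where F is the swap matrix. For every separable density matrix σ on ℂ^d ⊗ ℂ^d whose overlap t = Re Tr(P·σ) is strictly positive, one has −log t ≥ log √(4/3), where log denotes the (natural) real logarithm. In other words, the 0-relative entropy D₀(γ_d‖σ) = −log Tr(P_{γ_d} σ) of the totally antisymmetric state relative to any separable state is bounded below by the constant log √(4/3). -/
open Matrix Kronecker ComplexOrder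

/-- The swap matrix on `ℂ^d ⊗ ℂ^d`, with entries `F[(i,j),(k,l)] = δ_{il}·δ_{jk}`. -/
noncomputable def swapMat (d : ℕ) : Matrix (Fin d × Fin d) (Fin d × Fin d) ℂ :=
  fun p q => (if p.1 = q.2 then 1 else 0) * (if p.2 = q.1 then 1 else 0)

/-- The projector onto the antisymmetric subspace of `ℂ^d ⊗ ℂ^d`: `P = (1/2)(1 - F)`. -/
noncomputable def antiProj (d : ℕ) : Matrix (Fin d × Fin d) (Fin d × Fin d) ℂ :=
  (1 / 2 : ℂ) • ((1 : Matrix (Fin d × Fin d) (Fin d × Fin d) ℂ) - swapMat d)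

/-- A density matrix: positive semidefinite with trace 1. -/
def IsDensityMatrix {ι : Type} [Fintype ι] [DecidableEq ι] (ρ : Matrix ι ι ℂ) : Prop :=
  ρ.PosSemidef ∧ ρ.trace = 1

/-- A separable state on a bipartite system `ι ⊗ ι`: a finite convex combination of
Kronecker products of density matrices. -/
def IsSeparableState {ι : Type} [Fintype ι] [DecidableEq ι]
    (σ : Matrix (ι × ι) (ι × ι) ℂ) : Prop :=
  ∃ (m : ℕ) (p : Fin m → ℝ) (ρ τ : Fin m → Matrix ι ι ℂ),
    (∀ j, 0 ≤ p j) ∧ (∑ j, p j = 1) ∧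
    (∀ j, IsDensityMatrix (ρ j)) ∧ (∀ j, IsDensityMatrix (τ j)) ∧
    σ = ∑ j, (p j : ℂ) • (ρ j ⊗ₖ τ j)

lemma trace_conj_self_re_nonneg {n : Type} [Fintype n] [DecidableEq n]
    (C : Matrix n n ℂ) : 0 ≤ ((Cᴴ * C).trace).re := by
  have : (Cᴴ * C).trace = ∑ j, ∑ i, (starRingEnd ℂ) (C i j) * C i j := by
    simp [Matrix.trace, Matrix.mul_apply, Matrix.diag, Matrix.conjTranspose_apply]
  rw [this]
  simp only [Complex.re_sum]
  refine Finset.sum_nonneg fun j _ => Finset.sum_nonneg fun i _ => ?_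
  have := Complex.normSq_nonneg (C i j)
  rw [show ((starRingEnd ℂ) (C i j) * C i j) = (Complex.normSq (C i j) : ℂ) by
    rw [mul_comm]; exact Complex.mul_conj _]
  simpa using this

lemma trace_mul_psd_re_nonneg {n : Type} [Fintype n] [DecidableEq n]
    {ρ τ : Matrix n n ℂ} (hρ : ρ.PosSemidef) (hτ : τ.PosSemidef) :
    0 ≤ ((ρ * τ).trace).re := by
  obtain ⟨A, rfl⟩ : ∃ A : Matrix n n ℂ, _ = Aᴴ * A := by
    open scoped MatrixOrder Matrix.Norms.L2Operator in
    exact CStarAlgebra.nonneg_iff_eq_star_mul_self.mp hρ.nonneg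
  obtain ⟨B, rfl⟩ : ∃ B : Matrix n n ℂ, _ = Bᴴ * B := by
    open scoped MatrixOrder Matrix.Norms.L2Operator in
    exact CStarAlgebra.nonneg_iff_eq_star_mul_self.mp hτ.nonneg
  have key : ((Aᴴ * A) * (Bᴴ * B)).trace = ((A * Bᴴ)ᴴ * (A * Bᴴ)).trace := by
    rw [Matrix.conjTranspose_mul, Matrix.conjTranspose_conjTranspose]
    rw [show (B * Aᴴ) * (A * Bᴴ) = B * (Aᴴ * A * Bᴴ) by simp [Matrix.mul_assoc]]
    rw [Matrix.trace_mul_comm B (Aᴴ * A * Bᴴ)]; simp [Matrix.mul_assoc]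
  rw [key]
  exact trace_conj_self_re_nonneg _

lemma trace_swap_kron (d : ℕ) (ρ τ : Matrix (Fin d) (Fin d) ℂ) :
    (swapMat d * (ρ ⊗ₖ τ)).trace = (ρ * τ).trace := by
  simp only [Matrix.trace, Matrix.diag, Matrix.mul_apply, swapMat, Matrix.kroneckerMap_apply]
  rw [Fintype.sum_prod_type]
  simp only [Fintype.sum_prod_type, ite_mul, one_mul, zero_mul, mul_ite, mul_zero, mul_one]
  simp [Finset.sum_ite_eq, Finset.sum_ite_eq']
  rw [Finset.sum_comm]

/-- For every separable density matrix `σ` on `ℂ^d ⊗ ℂ^d` (`d ≥ 2`) whose overlap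
`t = Re Tr(P·σ)` with the antisymmetric projector is strictly positive, the
0-relative entropy `D₀(γ_d‖σ) = −log Tr(P σ)` is bounded below by `log √(4/3)`. -/
theorem zero_relative_entropy_antisymmetric_ge (d : ℕ) (hd : 2 ≤ d)
    (σ : Matrix (Fin d × Fin d) (Fin d × Fin d) ℂ)
    (hσ : IsDensityMatrix σ) (hsep : IsSeparableState σ)
    (t : ℝ) (ht : t = ((antiProj d * σ).trace).re) (htpos : 0 < t) :
    -Real.log t ≥ Real.log (Real.sqrt (4 / 3)) := by
  obtain ⟨m, p, ρ, τ, hp, hpsum, hρ, hτ, hσeq⟩ := hsep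
  have hFσ : (swapMat d * σ).trace = ∑ j, (p j : ℂ) * (ρ j * τ j).trace := by
    rw [hσeq, Matrix.mul_sum]
    simp only [Matrix.mul_smul, Matrix.trace_sum, Matrix.trace_smul, trace_swap_kron,
      smul_eq_mul]
  have hFre : 0 ≤ ((swapMat d * σ).trace).re := by
    rw [hFσ, Complex.re_sum]
    refine Finset.sum_nonneg fun j _ => ?_
    rw [Complex.re_ofReal_mul]
    exact mul_nonneg (hp j) (trace_mul_psd_re_nonneg (hρ j).1 (hτ j).1)
  have htr : (antiProj d * σ).trace = (1/2 : ℂ) * (1 - (swapMat d * σ).trace) := by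
    unfold antiProj
    rw [Matrix.smul_mul, Matrix.trace_smul, Matrix.sub_mul, Matrix.trace_sub,
      Matrix.one_mul, hσ.2, smul_eq_mul]
  have hhalf : t ≤ 1/2 := by
    rw [ht, htr, show ((1:ℂ)/2) = ((1/2 : ℝ) : ℂ) by norm_num, Complex.re_ofReal_mul,
      Complex.sub_re, Complex.one_re]
    nlinarith
  have hsqrt : Real.sqrt (4/3) ≤ 2 := by
    have : Real.sqrt (4/3) ≤ Real.sqrt 4 := Real.sqrt_le_sqrt (by norm_num)
    have h4 : Real.sqrt 4 = 2 := by
      rw [show (4:ℝ) = 2^2 by norm_num, Real.sqrt_sq (by norm_num : (0:ℝ) ≤ 2)]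
    linarith
  have hinv : (2:ℝ) ≤ t⁻¹ := by
    rw [le_inv_comm₀ (by norm_num) htpos]
    linarith
  calc Real.log (Real.sqrt (4/3)) ≤ Real.log 2 :=
        Real.log_le_log (Real.sqrt_pos.mpr (by norm_num)) hsqrt
    _ ≤ Real.log t⁻¹ := Real.log_le_log (by norm_num) hinv
    _ = -Real.log t := Real.log_inv t
end

section
/- Let d ≥ 2, let P = (1/2)(1 − F) be the antisymmetric projector on ℂ^d ⊗ ℂ^d, and let γ_d = (2/(d(d−1)))·P be the totally antisymmetric state. For every α with 0 < α < 1 and every separable density matrix σ on ℂ^d ⊗ ℂ^d, one has Re Tr(γ_d^α · σ^{1−α}) ≤ (3/4)^{(1−α)/2}, where for a positive semidefinite matrix A and real t ≥ 0, A^t denotes the positive semidefinite t-th power obtained by applying x ↦ x^t to the eigenvalues (continuous functional calculus); in particular γ_d^α = (2/(d(d−1)))^α · P. Equivalently, the quantum Rényi divergence D_α(γ_d‖σ) = (1/(α−1))·log Tr(γ_d^α σ^{1−α}) is at least log √(4/3) for all 0 < α < 1. -/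
open Matrix Kronecker ComplexOrder

/-- The totally antisymmetric state `γ_d = (2/(d(d−1)))·P`. -/
noncomputable def gammaState (d : ℕ) : Matrix (Fin d × Fin d) (Fin d × Fin d) ℂ :=
  (2 / ((d : ℂ) * ((d : ℂ) - 1))) • antiProj d

/-- The `t`-th power of a positive semidefinite Hermitian matrix, obtained by raising
each eigenvalue to the real power `t` in the spectral decomposition (and `0` on
non-Hermitian input). -/
noncomputable def matPow {ι : Type} [Fintype ι] [DecidableEq ι]
    (A : Matrix ι ι ℂ) (t : ℝ) : Matrix ι ι ℂ :=
  if hA : A.IsHermitian then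
    (hA.eigenvectorUnitary : Matrix ι ι ℂ) *
      Matrix.diagonal (fun i => ((hA.eigenvalues i ^ t : ℝ) : ℂ)) *
      star (hA.eigenvectorUnitary : Matrix ι ι ℂ)
  else 0

/-! ### Auxiliary lemmas -/

lemma swapMat_conjTranspose (d : ℕ) : (swapMat d)ᴴ = swapMat d := by
  ext ⟨i, j⟩ ⟨k, l⟩
  simp [swapMat, Matrix.conjTranspose_apply, apply_ite (starRingEnd ℂ), eq_comm, mul_comm]

lemma swapMat_mul_self (d : ℕ) : swapMat d * swapMat d = 1 := by
  ext ⟨i, j⟩ ⟨k, l⟩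
  simp only [swapMat, Matrix.mul_apply, Matrix.one_apply, Fintype.sum_prod_type, Prod.ext_iff,
    ite_and, ite_mul, mul_ite, one_mul, mul_one, zero_mul, mul_zero, Finset.sum_ite_eq,
    Finset.sum_ite_eq', Finset.mem_univ, if_true, Finset.sum_ite_irrel, Finset.sum_const_zero]
  split_ifs <;> simp_all [eq_comm]

lemma swapMat_trace (d : ℕ) : (swapMat d).trace = d := by
  simp [Matrix.trace, swapMat, Matrix.diag, Fintype.sum_prod_type, Finset.sum_ite_eq, eq_comm]

lemma antiProj_idem (d : ℕ) : antiProj d * antiProj d = antiProj d := by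
  have h : ((1 : Matrix (Fin d × Fin d) (Fin d × Fin d) ℂ) - swapMat d) * (1 - swapMat d)
      = (2 : ℂ) • (1 - swapMat d) := by
    rw [sub_mul, mul_sub, mul_sub, swapMat_mul_self, two_smul]
    simp only [one_mul, mul_one]
    abel
  rw [antiProj, Matrix.smul_mul, Matrix.mul_smul, h, smul_smul, smul_smul]
  norm_num

lemma antiProj_conjTranspose (d : ℕ) : (antiProj d)ᴴ = antiProj d := by
  simp [antiProj, swapMat_conjTranspose, Matrix.conjTranspose_smul]

lemma antiProj_posSemidef (d : ℕ) : (antiProj d).PosSemidef := by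
  have h : antiProj d = (antiProj d)ᴴ * antiProj d := by
    rw [antiProj_conjTranspose, antiProj_idem]
  rw [h]; exact Matrix.posSemidef_conjTranspose_mul_self _

lemma antiProj_trace (d : ℕ) :
    (antiProj d).trace = ((((d : ℝ) ^ 2 - d) / 2 : ℝ) : ℂ) := by
  simp [antiProj, Matrix.trace_smul, Matrix.trace_sub, swapMat_trace, Matrix.trace_one]
  ring

lemma diag_nonneg_of_psd {ι : Type} [Fintype ι] [DecidableEq ι] {M : Matrix ι ι ℂ}
    (hM : M.PosSemidef) (i : ι) : 0 ≤ M i i := by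
  exact hM.diag_nonneg

lemma trace_nonneg_of_psd {ι : Type} [Fintype ι] [DecidableEq ι] {M : Matrix ι ι ℂ}
    (hM : M.PosSemidef) : 0 ≤ M.trace :=
  Finset.sum_nonneg fun i _ => diag_nonneg_of_psd hM i

lemma trace_mul_psd_nonneg {ι : Type} [Fintype ι] [DecidableEq ι] {ρ τ : Matrix ι ι ℂ}
    (hρ : ρ.PosSemidef) (hτ : τ.PosSemidef) : 0 ≤ (ρ * τ).trace := by
  open scoped MatrixOrder in
  obtain ⟨B, hB⟩ := CStarAlgebra.nonneg_iff_eq_star_mul_self.mp hρ.nonneg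
  have h1 : (B * τ * Bᴴ).trace = (ρ * τ).trace := by
    rw [hB, Matrix.star_eq_conjTranspose, Matrix.trace_mul_cycle]
  rw [← h1]
  exact trace_nonneg_of_psd (hτ.mul_mul_conjTranspose_same _)

lemma trace_swapMat_kron {d : ℕ} (ρ τ : Matrix (Fin d) (Fin d) ℂ) :
    (swapMat d * (ρ ⊗ₖ τ)).trace = (ρ * τ).trace := by
  simp only [Matrix.trace, Matrix.diag, Matrix.mul_apply, swapMat, Matrix.kroneckerMap_apply,
    Fintype.sum_prod_type, ite_mul, mul_ite, one_mul, zero_mul, Finset.sum_ite_eq,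
    Finset.sum_ite_eq', Finset.mem_univ, if_true, Finset.sum_ite_irrel, Finset.sum_const_zero]
  rw [Finset.sum_comm]


lemma gammaState_eq (d : ℕ) :
    gammaState d = (((2 / ((d : ℝ) * ((d : ℝ) - 1))) : ℝ) : ℂ) • antiProj d := by
  rw [gammaState]
  norm_cast

lemma gammaState_isHermitian (d : ℕ) : (gammaState d).IsHermitian := by
  rw [gammaState_eq]
  simp [Matrix.IsHermitian, Matrix.conjTranspose_smul, antiProj_conjTranspose,
    Complex.star_def, Complex.conj_ofReal]

lemma matPow_gamma {d : ℕ} (hd : 2 ≤ d) {α : ℝ} (hα0 : 0 < α) :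
    matPow (gammaState d) α
      = ((((2 / ((d : ℝ) * ((d : ℝ) - 1))) ^ α : ℝ)) : ℂ) • antiProj d := by
  set c : ℝ := 2 / ((d : ℝ) * ((d : ℝ) - 1)) with hcdef
  have hd2 : (2 : ℝ) ≤ (d : ℝ) := by exact_mod_cast hd
  have hdd : (0 : ℝ) < (d : ℝ) * ((d : ℝ) - 1) := by nlinarith
  have hc : 0 < c := div_pos two_pos hdd
  have hG : (gammaState d).IsHermitian := gammaState_isHermitian d
  have hGsq : gammaState d * gammaState d = (c : ℂ) • gammaState d := by
    rw [gammaState_eq d, Matrix.smul_mul, Matrix.mul_smul, antiProj_idem, smul_smul]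
  set U := (hG.eigenvectorUnitary : Matrix (Fin d × Fin d) (Fin d × Fin d) ℂ) with hU
  set D := Matrix.diagonal ((RCLike.ofReal ∘ hG.eigenvalues : (Fin d × Fin d) → ℂ)) with hDdef
  have hUU : U * star U = 1 := Matrix.mem_unitaryGroup_iff.mp hG.eigenvectorUnitary.2
  have hspecG : gammaState d = U * D * star U := hG.spectral_theorem
  have hDeq : star U * gammaState d * U = D := by
    have hUU' : star U * U = 1 := Matrix.mem_unitaryGroup_iff'.mp hG.eigenvectorUnitary.2
    rw [hspecG]
    simp only [← Matrix.mul_assoc, hUU', Matrix.one_mul]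
    rw [Matrix.mul_assoc, hUU', Matrix.mul_one]
  have hDsq : D * D = (c : ℂ) • D := by
    rw [← hDeq]
    calc star U * gammaState d * U * (star U * gammaState d * U)
        = star U * (gammaState d * (U * star U) * gammaState d) * U := by
          simp only [Matrix.mul_assoc]
      _ = star U * (gammaState d * gammaState d) * U := by rw [hUU, Matrix.mul_one]
      _ = (c : ℂ) • (star U * gammaState d * U) := by
          rw [hGsq]
          simp only [Matrix.mul_smul, Matrix.smul_mul, Matrix.mul_assoc]
  have hev : ∀ i, hG.eigenvalues i = 0 ∨ hG.eigenvalues i = c := by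
    intro i
    have h := congrFun (congrFun hDsq i) i
    simp only [hDdef, Matrix.mul_apply, Matrix.diagonal_apply, Matrix.smul_apply,
      Function.comp_apply, smul_eq_mul] at h
    have h2 : ((hG.eigenvalues i : ℂ)) * (hG.eigenvalues i : ℂ)
        = (c : ℂ) * (hG.eigenvalues i : ℂ) := by simpa using h
    have h3 : hG.eigenvalues i * hG.eigenvalues i = c * hG.eigenvalues i := by
      exact_mod_cast h2
    have h4 : hG.eigenvalues i * (hG.eigenvalues i - c) = 0 := by nlinarith [h3]
    rcases mul_eq_zero.mp h4 with h5 | h5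
    · left; exact h5
    · right; linarith
  have hpow : ∀ i, (hG.eigenvalues i ^ α : ℝ) = c ^ (α - 1) * hG.eigenvalues i := by
    intro i
    rcases hev i with h | h
    · rw [h, Real.zero_rpow hα0.ne', mul_zero]
    · rw [h, show α = α - 1 + 1 by ring, Real.rpow_add hc, Real.rpow_one]
      ring_nf
  have hcc : c ^ (α - 1) * c = c ^ α := by
    rw [← Real.rpow_add_one hc.ne' (α - 1)]
    norm_num
  have hmp : matPow (gammaState d) α = U * Matrix.diagonal
      (fun i => ((hG.eigenvalues i ^ α : ℝ) : ℂ)) * star U := by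
    rw [matPow, dif_pos hG]
  have hdiag : Matrix.diagonal (fun i => ((hG.eigenvalues i ^ α : ℝ) : ℂ))
      = ((c ^ (α - 1) : ℝ) : ℂ) • D := by
    rw [hDdef]
    ext i j
    by_cases hij : i = j
    · subst hij
      simp only [Matrix.diagonal_apply_eq, Matrix.smul_apply, Function.comp_apply,
        smul_eq_mul, hpow i]
      exact Complex.ofReal_mul _ _
    · simp [Matrix.diagonal_apply_ne _ hij, hij]
  rw [hmp, hdiag, Matrix.mul_smul, Matrix.smul_mul, ← hspecG,
    gammaState_eq, smul_smul, ← hcc]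
  congr 1
  exact (Complex.ofReal_mul _ _).symm

lemma sep_trace_antiProj_le {d : ℕ} {σ : Matrix (Fin d × Fin d) (Fin d × Fin d) ℂ}
    (hsep : IsSeparableState σ) : ((antiProj d * σ).trace).re ≤ 1 / 2 := by
  obtain ⟨m, p, ρ, τ, hp0, hp1, hρ, hτ, rfl⟩ := hsep
  rw [Matrix.mul_sum, Matrix.trace_sum, Complex.re_sum]
  have hterm : ∀ j, ((antiProj d * ((p j : ℂ) • (ρ j ⊗ₖ τ j))).trace).re ≤ p j * (1 / 2) := by
    intro j
    rw [Matrix.mul_smul, Matrix.trace_smul]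
    have hPM : (antiProj d * (ρ j ⊗ₖ τ j)).trace
        = (1 / 2 : ℂ) * (1 - (ρ j * τ j).trace) := by
      rw [antiProj, Matrix.smul_mul, Matrix.trace_smul, Matrix.sub_mul, Matrix.one_mul,
        Matrix.trace_sub, trace_swapMat_kron, Matrix.trace_kronecker, (hρ j).2, (hτ j).2,
        one_mul, smul_eq_mul]
    have hx : 0 ≤ ((ρ j * τ j).trace).re := by
      have h := trace_mul_psd_nonneg (hρ j).1 (hτ j).1
      simpa using (Complex.le_def.mp h).1
    rw [hPM, smul_eq_mul]
    have hre : ((p j : ℂ) * ((1 / 2 : ℂ) * (1 - (ρ j * τ j).trace))).re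
        = p j * (1 / 2 * (1 - ((ρ j * τ j).trace).re)) := by
      rw [Complex.re_ofReal_mul]
      congr 1
      simp [Complex.mul_re, Complex.sub_re, Complex.one_re, Complex.sub_im, Complex.one_im]
    rw [hre]
    nlinarith [hp0 j, hx]
  calc ∑ j, ((antiProj d * ((p j : ℂ) • (ρ j ⊗ₖ τ j))).trace).re
      ≤ ∑ j, p j * (1 / 2) := Finset.sum_le_sum fun j _ => hterm j
    _ = 1 / 2 := by rw [← Finset.sum_mul, hp1, one_mul]

/-- For all `0 < α < 1` and every separable density matrix `σ` on `ℂ^d ⊗ ℂ^d` (`d ≥ 2`),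
`Re Tr(γ_d^α · σ^{1−α}) ≤ (3/4)^{(1−α)/2}`; equivalently, the Rényi divergence
`D_α(γ_d‖σ)` is at least `log √(4/3)`. -/
theorem renyi_overlap_antisymmetric_le (d : ℕ) (hd : 2 ≤ d)
    (α : ℝ) (hα0 : 0 < α) (hα1 : α < 1)
    (σ : Matrix (Fin d × Fin d) (Fin d × Fin d) ℂ)
    (hσ : IsDensityMatrix σ) (hsep : IsSeparableState σ) :
    ((matPow (gammaState d) α * matPow σ (1 - α)).trace).re
      ≤ (3 / 4 : ℝ) ^ ((1 - α) / 2) := by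
  obtain ⟨hσpsd, hσtr⟩ := hσ
  set q : ℝ := 1 - α with hqdef
  have hq0 : 0 < q := by rw [hqdef]; linarith
  have hq1 : q ≤ 1 := by rw [hqdef]; linarith
  have hd2 : (2 : ℝ) ≤ (d : ℝ) := by exact_mod_cast hd
  set c : ℝ := 2 / ((d : ℝ) * ((d : ℝ) - 1)) with hcdef
  have hdd : (0 : ℝ) < (d : ℝ) * ((d : ℝ) - 1) := by nlinarith
  have hc : 0 < c := div_pos two_pos hdd
  set r : ℝ := ((d : ℝ) ^ 2 - (d : ℝ)) / 2 with hrdef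
  have hr : 0 < r := by rw [hrdef]; nlinarith
  have hcr : c * r = 1 := by
    rw [hcdef, hrdef]
    have hd1 : (d : ℝ) - 1 ≠ 0 := by linarith
    field_simp
  have hσh : σ.IsHermitian := hσpsd.1
  set V := (hσh.eigenvectorUnitary : Matrix (Fin d × Fin d) (Fin d × Fin d) ℂ) with hV
  set μ := hσh.eigenvalues with hμdef
  have hμ0 : ∀ i, 0 ≤ μ i := fun i => hσpsd.eigenvalues_nonneg i
  have hVV : V * star V = 1 := Matrix.mem_unitaryGroup_iff.mp hσh.eigenvectorUnitary.2
  have hspec : σ = V * Matrix.diagonal ((RCLike.ofReal ∘ μ : (Fin d × Fin d) → ℂ)) * star V :=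
    hσh.spectral_theorem
  have hmpσ : matPow σ q = V * Matrix.diagonal (fun i => ((μ i ^ q : ℝ) : ℂ)) * star V := by
    rw [matPow, dif_pos hσh]
  set N : Matrix (Fin d × Fin d) (Fin d × Fin d) ℂ := star V * antiProj d * V with hN
  have hNpsd : N.PosSemidef := by
    rw [hN, Matrix.star_eq_conjTranspose]
    exact (antiProj_posSemidef d).conjTranspose_mul_mul_same V
  set w : Fin d × Fin d → ℝ := fun i => (N i i).re with hw
  have hw0 : ∀ i, 0 ≤ w i := by
    intro i
    have h := diag_nonneg_of_psd hNpsd i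
    simpa using (Complex.le_def.mp h).1
  -- generic: trace of (M * diagonal f)
  have trace_mul_diag : ∀ (M : Matrix (Fin d × Fin d) (Fin d × Fin d) ℂ)
      (f : (Fin d × Fin d) → ℂ),
      (M * Matrix.diagonal f).trace = ∑ i, M i i * f i := by
    intro M f
    simp [Matrix.trace, Matrix.diag, Matrix.mul_diagonal]
  -- generic: trace (antiProj * V * D * star V) = trace (N * D)
  have cyc : ∀ (D : Matrix (Fin d × Fin d) (Fin d × Fin d) ℂ),
      (antiProj d * (V * D * star V)).trace = (N * D).trace := by
    intro D
    rw [hN]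
    simp only [← Matrix.mul_assoc]
    rw [Matrix.trace_mul_comm]
    simp only [← Matrix.mul_assoc]
  -- sum of weights
  have hNtr : N.trace = ((r : ℝ) : ℂ) := by
    have h1 : N.trace = (antiProj d * (V * 1 * star V)).trace := by
      rw [cyc 1, Matrix.mul_one]
    rw [h1, Matrix.mul_one, hVV, Matrix.mul_one, antiProj_trace]
  have hsum_w : ∑ i, w i = r := by
    have h2 : (N.trace).re = r := by rw [hNtr]; simp
    rw [← h2, Matrix.trace, Complex.re_sum]
    rfl
  -- overlap s
  have hNμ : (antiProj d * σ).trace = ∑ i, N i i * ((μ i : ℝ) : ℂ) := by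
    conv_lhs => rw [hspec]
    rw [cyc, trace_mul_diag]
    rfl
  set s : ℝ := ∑ i, w i * μ i with hs
  have hs_eq : ((antiProj d * σ).trace).re = s := by
    rw [hNμ, Complex.re_sum]
    refine Finset.sum_congr rfl fun i _ => ?_
    simp [Complex.mul_re, hw]
  have hs0 : 0 ≤ s :=
    Finset.sum_nonneg fun i _ => mul_nonneg (hw0 i) (hμ0 i)
  have hs_le : s ≤ 1 / 2 := by
    rw [← hs_eq]; exact sep_trace_antiProj_le hsep
  -- the main trace as a real sum
  have main_eq : ((matPow (gammaState d) α * matPow σ q).trace).re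
      = c ^ α * ∑ i, w i * μ i ^ q := by
    rw [matPow_gamma hd hα0, hmpσ, ← hcdef, Matrix.smul_mul, Matrix.trace_smul, smul_eq_mul,
      cyc, trace_mul_diag, Complex.re_ofReal_mul, Complex.re_sum]
    congr 1
    refine Finset.sum_congr rfl fun i _ => ?_
    simp [Complex.mul_re, hw]
  -- Hölder / Jensen step
  have hr' : r ≠ 0 := hr.ne'
  have hW1 : ∑ i, w i / r = 1 := by rw [← Finset.sum_div, hsum_w, div_self hr']
  have holder := Real.rpow_arith_mean_le_arith_mean_rpow Finset.univ
    (fun i => w i / r) (fun i => μ i ^ q)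
    (fun i _ => div_nonneg (hw0 i) hr.le) hW1
    (fun i _ => Real.rpow_nonneg (hμ0 i) q) (one_le_one_div hq0 hq1)
  have hinner : ∀ i, (μ i ^ q) ^ ((1 : ℝ) / q) = μ i := by
    intro i
    rw [one_div, Real.rpow_rpow_inv (hμ0 i) hq0.ne']
  have hrhs : ∑ i, (w i / r) * (μ i ^ q) ^ ((1 : ℝ) / q) = s / r := by
    rw [hs, Finset.sum_div]
    refine Finset.sum_congr rfl fun i _ => ?_
    rw [hinner i, div_mul_eq_mul_div]
  rw [hrhs] at holder
  -- holder : (∑ (w i / r) * μ i ^ q) ^ (1/q) ≤ s / r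
  set A : ℝ := ∑ i, (w i / r) * μ i ^ q with hA
  have hA0 : 0 ≤ A :=
    Finset.sum_nonneg fun i _ =>
      mul_nonneg (div_nonneg (hw0 i) hr.le) (Real.rpow_nonneg (hμ0 i) q)
  have hA_le : A ≤ (s / r) ^ q := by
    have h5 : (A ^ ((1 : ℝ) / q)) ^ q ≤ (s / r) ^ q :=
      Real.rpow_le_rpow (Real.rpow_nonneg hA0 _) holder hq0.le
    rwa [one_div, Real.rpow_inv_rpow hA0 hq0.ne'] at h5
  have hsum_le : ∑ i, w i * μ i ^ q ≤ r * (s / r) ^ q := by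
    have h6 : ∑ i, w i * μ i ^ q = r * A := by
      rw [hA, Finset.mul_sum]
      refine Finset.sum_congr rfl fun i _ => ?_
      field_simp
    rw [h6]
    exact mul_le_mul_of_nonneg_left hA_le hr.le
  -- assemble
  have e1 : c ^ α * (r * (s / r) ^ q) = s ^ q := by
    rw [Real.div_rpow hs0 hr.le]
    have e2 : r * (s ^ q / r ^ q) = r ^ α * s ^ q := by
      rw [show α = 1 - q by rw [hqdef]; ring, Real.rpow_sub hr, Real.rpow_one]
      field_simp
      rw [hqdef]; ring_nf
    rw [e2, ← mul_assoc, ← Real.mul_rpow hc.le hr.le, hcr, Real.one_rpow, one_mul]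
  have step1 : ((matPow (gammaState d) α * matPow σ q).trace).re ≤ s ^ q := by
    rw [main_eq, ← e1]
    exact mul_le_mul_of_nonneg_left hsum_le (Real.rpow_nonneg hc.le α)
  have step2 : s ^ q ≤ (1 / 2 : ℝ) ^ q :=
    Real.rpow_le_rpow hs0 hs_le hq0.le
  have step3 : ((1 : ℝ) / 2) ^ q = ((1 : ℝ) / 4) ^ (q / 2) := by
    rw [show ((1 : ℝ) / 4) = ((1 : ℝ) / 2) ^ (2 : ℕ) by norm_num, ← Real.rpow_natCast,
      ← Real.rpow_mul (by norm_num : (0:ℝ) ≤ 1/2)]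
    ring_nf
  have step4 : ((1 : ℝ) / 4) ^ (q / 2) ≤ ((3 : ℝ) / 4) ^ (q / 2) :=
    Real.rpow_le_rpow (by norm_num) (by norm_num) (by positivity)
  calc ((matPow (gammaState d) α * matPow σ q).trace).re
      ≤ s ^ q := step1
    _ ≤ (1 / 2 : ℝ) ^ q := step2
    _ = ((1 : ℝ) / 4) ^ (q / 2) := step3
    _ ≤ (3 / 4 : ℝ) ^ (q / 2) := step4
end
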